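/- arXiv:2109.10354 — 2 statements merged into one kernel-verified Lean document; each statement's English description precedes it below -/
import Mathlib

section
/- For every real number x and every 0 < λ ≤ λ*, one has e^{λx} - λx - 1 ≤ (λ²/(λ*)²) (e^{λ*|x|} - λ*|x| - 1). -/
open Nat

lemma exp_sub_eq_tsum (y : ℝ) :
    Real.exp y - y - 1 = ∑' n : ℕ, y ^ (n + 2) / ((n + 2)! : ℝ) := by
  have h : Real.exp y = ∑' n : ℕ, y ^ n / n ! := by
    rw [Real.exp_eq_exp_ℝ, NormedSpace.exp_eq_tsum_div]
  have hs := Real.summable_pow_div_factorial y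
  have := Summable.sum_add_tsum_nat_add 2 hs
  rw [h, ← this]
  simp [Finset.sum_range_succ]
  ring

theorem stmt_4 (x lstar l : ℝ) (hstar : 0 < lstar) (hl : 0 < l) (hle : l ≤ lstar) :
    Real.exp (l * x) - l * x - 1 ≤
      (l ^ 2 / lstar ^ 2) * (Real.exp (lstar * |x|) - lstar * |x| - 1) := by
  have hs1 : Summable (fun n : ℕ => (l * x) ^ (n + 2) / ((n + 2)! : ℝ)) :=
    (summable_nat_add_iff (f := fun n : ℕ => (l * x) ^ n / (n ! : ℝ)) 2).2 (Real.summable_pow_div_factorial (l * x))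
  have hs2' : Summable (fun n : ℕ => (lstar * |x|) ^ (n + 2) / ((n + 2)! : ℝ)) :=
    (summable_nat_add_iff (f := fun n : ℕ => (lstar * |x|) ^ n / (n ! : ℝ)) 2).2 (Real.summable_pow_div_factorial (lstar * |x|))
  rw [exp_sub_eq_tsum, exp_sub_eq_tsum, ← tsum_mul_left]
  refine Summable.tsum_le_tsum (fun n => ?_) hs1 (hs2'.mul_left _)
  rw [mul_div_assoc']
  gcongr ?_ / _
  calc (l * x) ^ (n + 2) ≤ |l * x| ^ (n + 2) := by
          rw [← abs_pow]; exact le_abs_self _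
      _ = l ^ (n + 2) * |x| ^ (n + 2) := by
          rw [abs_mul, abs_of_pos hl, mul_pow]
      _ ≤ l ^ 2 / lstar ^ 2 * (lstar * |x|) ^ (n + 2) := by
          rw [mul_pow]
          have h1 : l ^ (n + 2) ≤ l ^ 2 / lstar ^ 2 * lstar ^ (n + 2) := by
            rw [div_mul_eq_mul_div, le_div_iff₀ (by positivity)]
            have h2 : l ^ n ≤ lstar ^ n := pow_le_pow_left₀ hl.le hle n
            calc l ^ (n + 2) * lstar ^ 2 = l ^ n * (l ^ 2 * lstar ^ 2) := by ring
              _ ≤ lstar ^ n * (l ^ 2 * lstar ^ 2) := by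
                  apply mul_le_mul_of_nonneg_right h2 (by positivity)
              _ = l ^ 2 * lstar ^ (n + 2) := by ring
          rw [← mul_assoc]
          exact mul_le_mul_of_nonneg_right h1 (by positivity)
end

section
/- Let X, Y be real random variables with ‖X‖_q ≤ μ and ‖Y‖_q ≤ μ for some q > 2, and let ν > 0 with truncations X̃ = max(min(X,ν),-ν), Ỹ = max(min(Y,ν),-ν). Then |E[X̃Ỹ] - E[XY]| ≤ 2 μ^q ν^{2-q}. -/
open MeasureTheory

lemma pow_aux {ν q a : ℝ} (hν : 0 < ν) (hq : 2 < q) (ha : ν ≤ a) :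
    a * ν ≤ a ^ q * ν ^ (2 - q) ∧ a * a ≤ a ^ q * ν ^ (2 - q) := by
  have ha0 : 0 < a := hν.trans_le ha
  have h1 : (1:ℝ) ≤ a / ν := (one_le_div hν).2 ha
  have hνq : (0:ℝ) < ν ^ q := Real.rpow_pos_of_pos hν q
  have key : a ^ q * ν ^ (2 - q) = (a / ν) ^ q * ν ^ (2:ℝ) := by
    rw [Real.div_rpow ha0.le hν.le, Real.rpow_sub hν]
    field_simp
  have hν2 : ν ^ (2:ℝ) = ν * ν := by
    rw [show (2:ℝ) = ((2:ℕ):ℝ) by norm_num, Real.rpow_natCast]; ring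
  have hmono1 : a / ν ≤ (a / ν) ^ q := by
    calc a / ν = (a / ν) ^ (1:ℝ) := (Real.rpow_one _).symm
    _ ≤ (a / ν) ^ q := Real.rpow_le_rpow_of_exponent_le h1 (by linarith)
  have hmono2 : (a / ν) * (a / ν) ≤ (a / ν) ^ q := by
    calc (a / ν) * (a / ν) = (a / ν) ^ (2:ℝ) := by
          rw [show (2:ℝ) = ((2:ℕ):ℝ) by norm_num, Real.rpow_natCast]; ring
    _ ≤ (a / ν) ^ q := Real.rpow_le_rpow_of_exponent_le h1 (by linarith)
  constructor
  · rw [key, hν2]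
    calc a * ν = (a / ν) * (ν * ν) := by field_simp
    _ ≤ (a / ν) ^ q * (ν * ν) := by
        apply mul_le_mul_of_nonneg_right hmono1 (by positivity)
  · rw [key, hν2]
    calc a * a = ((a / ν) * (a / ν)) * (ν * ν) := by field_simp
    _ ≤ (a / ν) ^ q * (ν * ν) := by
        apply mul_le_mul_of_nonneg_right hmono2 (by positivity)

lemma clamp_key {ν q : ℝ} (hν : 0 < ν) (hq : 2 < q) (x y : ℝ) :
    |max (min x ν) (-ν) * max (min y ν) (-ν) - x * y| ≤ (|x| ^ q + |y| ^ q) * ν ^ (2 - q) := by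
  have hRHS : (0:ℝ) ≤ (|x| ^ q + |y| ^ q) * ν ^ (2 - q) := by positivity
  have hclamp_eq : ∀ z : ℝ, |z| ≤ ν → max (min z ν) (-ν) = z := by
    intro z hz
    rw [abs_le] at hz
    rw [min_eq_left hz.2, max_eq_left hz.1]
  have hclamp_abs : ∀ z : ℝ, |max (min z ν) (-ν)| ≤ ν := by
    intro z
    rw [abs_le]
    constructor
    · exact le_max_right _ _
    · exact max_le (min_le_right _ _) (by linarith)
  -- helper for mixed case: ν < |x|, |y| ≤ ν
  have hmixed : ∀ x y : ℝ, ν < |x| → |y| ≤ ν →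
      |max (min x ν) (-ν) * max (min y ν) (-ν) - x * y| ≤ (|x| ^ q + |y| ^ q) * ν ^ (2 - q) := by
    intro x y hx hy
    rw [hclamp_eq y hy]
    have hux : |max (min x ν) (-ν) - x| ≤ |x| := by
      rcases lt_abs.1 hx with h | h
      · rw [min_eq_right h.le, max_eq_left (by linarith)]
        rw [abs_of_nonpos (by linarith), abs_of_pos (by linarith)]
        linarith
      · have hxneg : x < -ν := by linarith
        rw [min_eq_left (by linarith), max_eq_right hxneg.le]
        rw [abs_of_nonneg (by linarith), abs_of_neg (by linarith)]
        linarith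
    have h1 : |max (min x ν) (-ν) * y - x * y| = |max (min x ν) (-ν) - x| * |y| := by
      rw [← abs_mul]; ring_nf
    have h2 : |max (min x ν) (-ν) - x| * |y| ≤ |x| * ν :=
      mul_le_mul hux hy (abs_nonneg _) (abs_nonneg _)
    have h3 : |x| * ν ≤ |x| ^ q * ν ^ (2 - q) := (pow_aux hν hq hx.le).1
    have h4 : |x| ^ q * ν ^ (2 - q) ≤ (|x| ^ q + |y| ^ q) * ν ^ (2 - q) := by
      apply mul_le_mul_of_nonneg_right _ (by positivity)
      have : (0:ℝ) ≤ |y| ^ q := by positivity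
      linarith
    calc |max (min x ν) (-ν) * y - x * y| = |max (min x ν) (-ν) - x| * |y| := h1
      _ ≤ |x| * ν := h2
      _ ≤ |x| ^ q * ν ^ (2 - q) := h3
      _ ≤ (|x| ^ q + |y| ^ q) * ν ^ (2 - q) := h4
  rcases le_or_gt (|x|) ν with hx | hx
  · rcases le_or_gt (|y|) ν with hy | hy
    · rw [hclamp_eq x hx, hclamp_eq y hy]
      simpa using hRHS
    · have := hmixed y x hy hx
      calc |max (min x ν) (-ν) * max (min y ν) (-ν) - x * y|
          = |max (min y ν) (-ν) * max (min x ν) (-ν) - y * x| := by ring_nf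
        _ ≤ (|y| ^ q + |x| ^ q) * ν ^ (2 - q) := this
        _ = (|x| ^ q + |y| ^ q) * ν ^ (2 - q) := by ring
  · rcases le_or_gt (|y|) ν with hy | hy
    · exact hmixed x y hx hy
    · -- both large
      have hpx := (pow_aux hν hq hx.le).2
      have hpy := (pow_aux hν hq hy.le).2
      have htri : |max (min x ν) (-ν) * max (min y ν) (-ν) - x * y|
          ≤ |max (min x ν) (-ν) * max (min y ν) (-ν)| + |x * y| := abs_sub _ _
      have h1 : |max (min x ν) (-ν) * max (min y ν) (-ν)| ≤ ν * ν := by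
        rw [abs_mul]
        exact mul_le_mul (hclamp_abs x) (hclamp_abs y) (abs_nonneg _) hν.le
      have h2 : ν * ν ≤ |x| * |y| :=
        mul_le_mul hx.le hy.le hν.le (abs_nonneg _)
      have h3 : 2 * (|x| * |y|) ≤ |x| * |x| + |y| * |y| := by nlinarith [sq_nonneg (|x| - |y|)]
      calc |max (min x ν) (-ν) * max (min y ν) (-ν) - x * y|
          ≤ |max (min x ν) (-ν) * max (min y ν) (-ν)| + |x * y| := htri
        _ ≤ ν * ν + |x| * |y| := by rw [abs_mul x y]; linarith
        _ ≤ |x| * |x| + |y| * |y| := by linarith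
        _ ≤ |x| ^ q * ν ^ (2 - q) + |y| ^ q * ν ^ (2 - q) := by linarith
        _ = (|x| ^ q + |y| ^ q) * ν ^ (2 - q) := by ring

theorem stmt_10 {Ω : Type*} [MeasurableSpace Ω] (μ : Measure Ω) [IsProbabilityMeasure μ]
    (X Y : Ω → ℝ) (hX : AEMeasurable X μ) (hY : AEMeasurable Y μ)
    (q m ν : ℝ) (hq : 2 < q) (hm : 0 < m) (hν : 0 < ν)
    (hintX : Integrable (fun ω => |X ω| ^ q) μ)
    (hintY : Integrable (fun ω => |Y ω| ^ q) μ)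
    (hintXY : Integrable (fun ω => X ω * Y ω) μ)
    (hmomX : (∫ ω, |X ω| ^ q ∂μ) ^ (1 / q) ≤ m)
    (hmomY : (∫ ω, |Y ω| ^ q ∂μ) ^ (1 / q) ≤ m) :
    |(∫ ω, max (min (X ω) ν) (-ν) * max (min (Y ω) ν) (-ν) ∂μ) - ∫ ω, X ω * Y ω ∂μ| ≤
      2 * m ^ q * ν ^ (2 - q) := by
  have hq0 : 0 < q := by linarith
  have hcmeas : Measurable fun z : ℝ => max (min z ν) (-ν) :=
    (measurable_id.min measurable_const).max measurable_const
  have hT : AEMeasurable (fun ω => max (min (X ω) ν) (-ν) * max (min (Y ω) ν) (-ν)) μ :=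
    (hcmeas.comp_aemeasurable hX).mul (hcmeas.comp_aemeasurable hY)
  have hclamp_abs : ∀ z : ℝ, |max (min z ν) (-ν)| ≤ ν := by
    intro z
    rw [abs_le]
    exact ⟨le_max_right _ _, max_le (min_le_right _ _) (by linarith)⟩
  have hTint : Integrable (fun ω => max (min (X ω) ν) (-ν) * max (min (Y ω) ν) (-ν)) μ := by
    apply (integrable_const (ν * ν)).mono' hT.aestronglyMeasurable
    filter_upwards with ω
    rw [Real.norm_eq_abs, abs_mul]
    exact mul_le_mul (hclamp_abs _) (hclamp_abs _) (abs_nonneg _) hν.le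
  -- moment bounds
  have hmom : ∀ Z : Ω → ℝ, Integrable (fun ω => |Z ω| ^ q) μ →
      (∫ ω, |Z ω| ^ q ∂μ) ^ (1 / q) ≤ m → (∫ ω, |Z ω| ^ q ∂μ) ≤ m ^ q := by
    intro Z hZint hZmom
    have hnn : 0 ≤ ∫ ω, |Z ω| ^ q ∂μ :=
      integral_nonneg fun ω => Real.rpow_nonneg (abs_nonneg _) _
    have := Real.rpow_le_rpow (Real.rpow_nonneg hnn _) hZmom hq0.le
    rwa [← Real.rpow_mul hnn, one_div_mul_cancel hq0.ne', Real.rpow_one] at this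
  have hmX := hmom X hintX hmomX
  have hmY := hmom Y hintY hmomY
  have hbound : ∀ ω, |max (min (X ω) ν) (-ν) * max (min (Y ω) ν) (-ν) - X ω * Y ω|
      ≤ (|X ω| ^ q + |Y ω| ^ q) * ν ^ (2 - q) := fun ω => clamp_key hν hq _ _
  rw [← integral_sub hTint hintXY]
  calc |∫ ω, (max (min (X ω) ν) (-ν) * max (min (Y ω) ν) (-ν) - X ω * Y ω) ∂μ|
      ≤ ∫ ω, |max (min (X ω) ν) (-ν) * max (min (Y ω) ν) (-ν) - X ω * Y ω| ∂μ :=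
        by simpa [Real.norm_eq_abs] using (norm_integral_le_integral_norm
          (μ := μ) (fun ω => max (min (X ω) ν) (-ν) * max (min (Y ω) ν) (-ν) - X ω * Y ω))
    _ ≤ ∫ ω, (|X ω| ^ q + |Y ω| ^ q) * ν ^ (2 - q) ∂μ := by
        apply integral_mono (hTint.sub hintXY).abs ((hintX.add hintY).mul_const _)
        exact hbound
    _ = ((∫ ω, |X ω| ^ q ∂μ) + ∫ ω, |Y ω| ^ q ∂μ) * ν ^ (2 - q) := by
        rw [integral_mul_const, integral_add hintX hintY]
    _ ≤ (m ^ q + m ^ q) * ν ^ (2 - q) := by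
        apply mul_le_mul_of_nonneg_right (by linarith) (le_of_lt (Real.rpow_pos_of_pos hν _))
    _ = 2 * m ^ q * ν ^ (2 - q) := by ring
end
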